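/- Let c₀ > 0, β > 0 and p ∈ ℕ with p ≥ 1, and set μ_k = c₀ (k+1)^{−β} for k ≥ 0. Then for every k ≥ 0, 0 < Δ^p μ_k ≤ c₀ (β)_p (k+1)^{−(β+p)}, where (β)_p = β(β+1)⋯(β+p−1) is the rising factorial. -/

import Mathlib

open Filter Topology

noncomputable section

/-- Forward difference operator on sequences: `(Δa)_k = a_k - a_{k+1}`. -/
def fdiff (a : ℕ → ℝ) : ℕ → ℝ := fun k => a k - a (k + 1)

private lemma fdiff_eq_neg_fwdDiff (a : ℕ → ℝ) : fdiff a = (-1 : ℝ) • fwdDiff 1 a := by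
  funext k
  simp only [fdiff, fwdDiff, Pi.smul_apply, smul_eq_mul]
  ring

private lemma fdiff_iter_eq (a : ℕ → ℝ) (p : ℕ) :
    fdiff^[p] a = ((-1 : ℝ) ^ p) • (fwdDiff 1)^[p] a := by
  induction p with
  | zero => simp
  | succ p ih =>
      rw [Function.iterate_succ_apply', ih, Function.iterate_succ_apply',
        fdiff_eq_neg_fwdDiff, fwdDiff_const_smul, smul_smul]
      congr 1
      ring

/-- Binomial formula for iterated forward differences. -/
private lemma fdiff_iter_sum (a : ℕ → ℝ) (p k : ℕ) :
    fdiff^[p] a k = ∑ j ∈ Finset.range (p + 1), (-1 : ℝ) ^ j * (p.choose j) * a (k + j) := by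
  rw [fdiff_iter_eq]
  simp only [Pi.smul_apply, smul_eq_mul]
  rw [fwdDiff_iter_eq_sum_shift, Finset.mul_sum]
  refine Finset.sum_congr rfl fun j hj => ?_
  rw [Finset.mem_range, Nat.lt_succ_iff] at hj
  have harg : k + j • 1 = k + j := by simp
  rw [harg]
  have hcast : ((-1 : ℤ) ^ (p - j) * (p.choose j : ℤ)) • a (k + j)
      = ((-1 : ℝ) ^ (p - j) * (p.choose j : ℝ)) * a (k + j) := by
    rw [zsmul_eq_mul]
    push_cast
    ring
  rw [hcast]
  have hsign : (-1 : ℝ) ^ p * (-1 : ℝ) ^ (p - j) = (-1 : ℝ) ^ j := by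
    rw [← pow_add]
    have h2 : p + (p - j) = 2 * (p - j) + j := by omega
    rw [h2, pow_add, pow_mul]
    norm_num
  calc (-1 : ℝ) ^ p * ((-1 : ℝ) ^ (p - j) * (p.choose j : ℝ) * a (k + j))
      = ((-1 : ℝ) ^ p * (-1 : ℝ) ^ (p - j)) * (p.choose j : ℝ) * a (k + j) := by ring
    _ = (-1 : ℝ) ^ j * (p.choose j : ℝ) * a (k + j) := by rw [hsign]

/-- The `p`-th difference of `j ↦ (x+j)^{-β}` at `0`, as an explicit sum. -/
private def S (p : ℕ) (β x : ℝ) : ℝ :=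
  ∑ j ∈ Finset.range (p + 1), (-1 : ℝ) ^ j * (p.choose j) * (x + j) ^ (-β)

private lemma S_eq_fdiff (p : ℕ) (β x : ℝ) :
    S p β x = fdiff^[p] (fun j : ℕ => (x + j) ^ (-β)) 0 := by
  rw [fdiff_iter_sum]
  simp [S]

private lemma sub_eq_integral {β y : ℝ} (hβ : 0 < β) (hy : 0 < y) :
    y ^ (-β) - (y + 1) ^ (-β) = β * ∫ t in (0:ℝ)..1, (y + t) ^ (-(β + 1)) := by
  have hcomp : (∫ t in (0:ℝ)..1, (y + t) ^ (-(β + 1)))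
      = ∫ u in (y + 0)..(y + 1), u ^ (-(β + 1)) :=
    intervalIntegral.integral_comp_add_left (fun u => u ^ (-(β + 1))) y
  rw [hcomp, add_zero]
  rw [integral_rpow]
  · have hexp : (-(β + 1)) + 1 = -β := by ring
    rw [hexp]
    have hne : β ≠ 0 := ne_of_gt hβ
    rw [div_neg, mul_neg, mul_div_assoc', mul_div_cancel_left₀ _ hne]
    ring
  · right
    constructor
    · intro h
      have : β = 0 := by linarith [neg_injective h]
      linarith
    · intro h0
      rw [Set.mem_uIcc] at h0
      rcases h0 with ⟨h1, h2⟩ | ⟨h1, h2⟩ <;> linarith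

private lemma contS (p : ℕ) (γ x : ℝ) (hx : 0 < x) :
    ContinuousOn (fun t => S p γ (x + t)) (Set.Icc (0:ℝ) 1) := by
  simp only [S]
  apply continuousOn_finset_sum
  intro j _
  apply ContinuousOn.mul continuousOn_const
  apply ContinuousOn.rpow_const
  · exact (continuousOn_const.add continuousOn_id).add continuousOn_const
  · intro t ht
    left
    have h0 : (0:ℝ) ≤ t := ht.1
    have hj : (0:ℝ) ≤ (j:ℝ) := Nat.cast_nonneg j
    intro hzero
    nlinarith

private lemma intble (c γ y : ℝ) (hy : 0 < y) :
    IntervalIntegrable (fun t => c * (y + t) ^ γ) MeasureTheory.volume 0 1 := by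
  apply ContinuousOn.intervalIntegrable
  apply ContinuousOn.mul continuousOn_const
  apply ContinuousOn.rpow_const (continuousOn_const.add continuousOn_id)
  intro t ht
  left
  rw [Set.uIcc_of_le (by norm_num : (0:ℝ) ≤ 1)] at ht
  have h0 := ht.1
  show y + t ≠ 0
  exact ne_of_gt (by linarith)

private lemma S_rec (p : ℕ) {β x : ℝ} (hβ : 0 < β) (hx : 0 < x) :
    S (p + 1) β x = β * ∫ t in (0:ℝ)..1, S p (β + 1) (x + t) := by
  have ha : ∀ j : ℕ, fdiff (fun m : ℕ => (x + m) ^ (-β)) j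
      = β * ∫ t in (0:ℝ)..1, (x + j + t) ^ (-(β + 1)) := by
    intro j
    have hyj : (0:ℝ) < x + j := by positivity
    have h := sub_eq_integral hβ hyj
    simp only [fdiff]
    have hc : (x + ((j + 1 : ℕ) : ℝ)) = (x + j) + 1 := by push_cast; ring
    rw [hc]
    exact h
  calc S (p + 1) β x
      = fdiff^[p] (fdiff (fun m : ℕ => (x + m) ^ (-β))) 0 := by
        rw [S_eq_fdiff, Function.iterate_succ_apply]
    _ = ∑ j ∈ Finset.range (p + 1), (-1 : ℝ) ^ j * (p.choose j) *
          (β * ∫ t in (0:ℝ)..1, (x + j + t) ^ (-(β + 1))) := by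
        rw [fdiff_iter_sum]
        exact Finset.sum_congr rfl fun j _ => by rw [Nat.zero_add, ha j]
    _ = β * ∑ j ∈ Finset.range (p + 1),
          ∫ t in (0:ℝ)..1, (-1 : ℝ) ^ j * (p.choose j) * (x + j + t) ^ (-(β + 1)) := by
        rw [Finset.mul_sum]
        refine Finset.sum_congr rfl fun j _ => ?_
        rw [intervalIntegral.integral_const_mul]
        ring
    _ = β * ∫ t in (0:ℝ)..1, ∑ j ∈ Finset.range (p + 1),
          (-1 : ℝ) ^ j * (p.choose j) * (x + j + t) ^ (-(β + 1)) := by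
        rw [intervalIntegral.integral_finset_sum]
        intro j _
        exact intble _ _ _ (add_pos_of_pos_of_nonneg hx (Nat.cast_nonneg j))
    _ = β * ∫ t in (0:ℝ)..1, S p (β + 1) (x + t) := by
        congr 1
        apply intervalIntegral.integral_congr
        intro t _
        simp only [S]
        exact Finset.sum_congr rfl fun j _ => by rw [add_right_comm]

private lemma S_bounds (p : ℕ) : ∀ β x : ℝ, 0 < β → 0 < x →
    0 < S p β x ∧ S p β x ≤ (∏ i ∈ Finset.range p, (β + i)) * x ^ (-(β + p)) := by
  induction p with
  | zero =>
      intro β x hβ hx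
      have hS0 : S 0 β x = x ^ (-β) := by simp [S]
      constructor
      · rw [hS0]
        exact Real.rpow_pos_of_pos hx _
      · rw [hS0]
        simp
  | succ p ih =>
      intro β x hβ hx
      have hβ1 : (0:ℝ) < β + 1 := by linarith
      have hrec := S_rec p hβ hx
      have hcont : ContinuousOn (fun t => S p (β + 1) (x + t)) (Set.Icc (0:ℝ) 1) :=
        contS p (β + 1) x hx
      have hint : IntervalIntegrable (fun t => S p (β + 1) (x + t)) MeasureTheory.volume 0 1 := by
        apply ContinuousOn.intervalIntegrable
        rwa [Set.uIcc_of_le (by norm_num : (0:ℝ) ≤ 1)]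
      constructor
      · rw [hrec]
        apply mul_pos hβ
        apply intervalIntegral.intervalIntegral_pos_of_pos_on hint _ (by norm_num)
        intro t ht
        exact (ih (β + 1) (x + t) hβ1 (by linarith [ht.1])).1
      · rw [hrec]
        have hCnn : (0:ℝ) ≤ ∏ i ∈ Finset.range p, (β + 1 + i) := by
          apply Finset.prod_nonneg
          intro i _
          positivity
        have hmono : (∫ t in (0:ℝ)..1, S p (β + 1) (x + t))
            ≤ ∫ _t in (0:ℝ)..1, (∏ i ∈ Finset.range p, (β + 1 + i)) * x ^ (-(β + 1 + p)) := by
          apply intervalIntegral.integral_mono_on (by norm_num : (0:ℝ) ≤ 1) hint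
            intervalIntegrable_const
          intro t ht
          refine (ih (β + 1) (x + t) hβ1 (by linarith [ht.1])).2.trans ?_
          apply mul_le_mul_of_nonneg_left _ hCnn
          exact Real.rpow_le_rpow_of_nonpos hx (by linarith [ht.1])
            (by linarith [Nat.cast_nonneg (α := ℝ) p])
        rw [intervalIntegral.integral_const, smul_eq_mul] at hmono
        have hle := mul_le_mul_of_nonneg_left hmono hβ.le
        refine hle.trans (le_of_eq ?_)
        have hprod : (∏ i ∈ Finset.range (p + 1), (β + (i:ℝ)))
            = β * ∏ i ∈ Finset.range p, (β + 1 + i) := by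
          rw [Finset.prod_range_succ']
          simp only [Nat.cast_zero, add_zero, Nat.cast_add, Nat.cast_one]
          rw [mul_comm]
          congr 1
          exact Finset.prod_congr rfl fun i _ => by ring
        have hexp : -(β + ((p:ℕ) + 1 : ℕ)) = -(β + 1 + p) := by push_cast; ring
        rw [hprod, hexp]
        ring

/-- For `μ_k = c₀ (k+1)^{-β}` one has
`0 < Δ^p μ_k ≤ c₀ (β)_p (k+1)^{-(β+p)}` for every `k`, where `(β)_p` is the rising factorial. -/
theorem fdiff_pow_bounds (c₀ β : ℝ) (hc₀ : 0 < c₀) (hβ : 0 < β) (p : ℕ) (hp : 1 ≤ p)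
    (μ : ℕ → ℝ) (hμ : ∀ k, μ k = c₀ * ((k : ℝ) + 1) ^ (-β)) (k : ℕ) :
    0 < fdiff^[p] μ k ∧
    fdiff^[p] μ k ≤ c₀ * (∏ i ∈ Finset.range p, (β + i)) * ((k : ℝ) + 1) ^ (-(β + p)) := by
  have key : fdiff^[p] μ k = c₀ * S p β ((k : ℝ) + 1) := by
    rw [fdiff_iter_sum]
    simp only [S]
    rw [Finset.mul_sum]
    refine Finset.sum_congr rfl fun j _ => ?_
    rw [hμ]
    have hcast : ((k + j : ℕ) : ℝ) + 1 = ((k : ℝ) + 1) + j := by push_cast; ring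
    rw [hcast]
    ring
  obtain ⟨h1, h2⟩ := S_bounds p β ((k : ℝ) + 1) hβ (by positivity)
  constructor
  · rw [key]; exact mul_pos hc₀ h1
  · rw [key, mul_assoc]
    exact mul_le_mul_of_nonneg_left h2 hc₀.le

end
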